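/- Under the Lazy Set axioms A0–A2, if X ⇒ Y ⇒ Z and X is a Cnt event, then Begin(X) < End(Z). -/
import Mathlib


/-- Event type: Add, Rem, or Contains. -/
inductive EType | add | rem | cnt
deriving DecidableEq

/-- Status of an event: 0, 1, or f (failed). -/
inductive Status | s0 | s1 | sf
deriving DecidableEq

open EType Status

/-- A Tarskian system execution satisfying the Lazy Set axioms A0–A2.
Events are typed Add/Rem/Cnt; Add and Rem events are actions (with
Begin(E) = End(E) = E) and the actions are linearly ordered by the temporal
precedence relation `lt`; Cnt events are high-level with Begin(E) < End(E);
`γ` is defined on the Op¹ events and satisfies axioms A1 and A2. -/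
structure LazySys where
  E : Type
  lt : E → E → Prop
  typ : E → EType
  χ : E → Status
  kval : E → ℕ
  Begin : E → E
  End' : E → E
  γ : E → E
  action : E → Prop
  lt_irrefl : ∀ e, ¬ lt e e
  lt_trans : ∀ a b c, lt a b → lt b c → lt a c
  act_lin : ∀ a b, action a → action b → a ≠ b → lt a b ∨ lt b a
  addRem_action : ∀ e, typ e ≠ EType.cnt →
    action e ∧ Begin e = e ∧ End' e = e
  begin_end_action : ∀ e, action (Begin e) ∧ action (End' e)
  cnt_interval : ∀ e, typ e = EType.cnt → lt (Begin e) (End' e)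
  lt_iff : ∀ a b, lt a b ↔ lt (End' a) (Begin b)
  A1 : ∀ A, χ A = Status.s1 →
    typ (γ A) = EType.add ∧ χ (γ A) = Status.s0 ∧ kval (γ A) = kval A ∧
    lt (γ A) (End' A) ∧
    ¬ ∃ R, typ R = EType.rem ∧ χ R = Status.s1 ∧ γ R = γ A ∧
      lt (γ A) R ∧ lt R A
  A2 : ∀ A B, typ A = EType.add → χ A = Status.s0 → χ B = Status.s0 →
    lt A B → kval A = kval B →
    ∃ R, typ R = EType.rem ∧ χ R = Status.s1 ∧ γ R = A ∧ lt R (End' B)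

/-- The auxiliary relation ⇒ used in the linearization proof. -/
def LazySys.arrow (S : LazySys) (X Y : S.E) : Prop :=
  (S.typ Y = EType.cnt ∧ S.χ Y = Status.s1 ∧ X = S.γ Y) ∨
  (S.typ X = EType.cnt ∧ S.χ X = Status.s1 ∧
    S.typ Y = EType.rem ∧ S.χ Y = Status.s1 ∧ S.γ Y = S.γ X) ∨
  (S.typ X = EType.rem ∧ S.χ X = Status.s1 ∧
    S.typ Y = EType.cnt ∧ S.χ Y = Status.s0 ∧
    S.kval X = S.kval Y ∧ ¬ S.lt Y X ∧ S.lt (S.γ X) Y) ∨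
  (S.typ X = EType.cnt ∧ S.χ X = Status.s0 ∧
    S.typ Y = EType.add ∧ S.χ Y = Status.s0 ∧
    S.kval X = S.kval Y ∧ ¬ S.lt Y X)

/-- Under the Lazy Set axioms A0–A2, if X ⇒ Y ⇒ Z and X is a
Cnt event, then Begin(X) < End(Z). -/
theorem stmt9 (S : LazySys) :
    ∀ X Y Z : S.E, S.arrow X Y → S.arrow Y Z → S.typ X = cnt →
      S.lt (S.Begin X) (S.End' Z) := by

  intro X Y Z hXY hYZ hX
  rcases hXY with ⟨hYc, hY1, hXγ⟩ | ⟨hXc, hX1, hYr, hY1, hγ⟩ | ⟨hXr, _⟩ |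
    ⟨hXc, hX0, hYa, hY0, hk, hnYX⟩
  · -- impossible: X = γ Y is an Add
    rw [hXγ, (S.A1 Y hY1).1] at hX; cases hX
  · -- case 2: X cnt¹, Y rem¹, γ Y = γ X
    obtain ⟨actY, hBY, hEY⟩ := S.addRem_action Y (by simp [hYr])
    -- analyze Y ⇒ Z
    rcases hYZ with ⟨hZc, hZ1, hYγ⟩ | ⟨hYc, _⟩ | ⟨_, _, hZc, hZ0, hkYZ, hnZY, hγYZ⟩ |
      ⟨hYc, _⟩
    · rw [hYγ, (S.A1 Z hZ1).1] at hYr; cases hYr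
    · rw [hYc] at hYr; cases hYr
    · -- main subcase: Y rem¹, Z cnt⁰
      obtain ⟨hYadd, hY0', hkY, hltY, _⟩ := S.A1 Y hY1
      have hγXY : S.lt (S.γ X) Y := by rw [hEY] at hltY; rwa [hγ] at hltY
      -- ¬ lt Y X from A1 on X
      have hnYX : ¬ S.lt Y X := fun h =>
        (S.A1 X hX1).2.2.2.2 ⟨Y, hYr, hY1, hγ, hγXY, h⟩
      have hnYBX : ¬ S.lt Y (S.Begin X) := by
        intro h; exact hnYX ((S.lt_iff Y X).2 (by rwa [hEY]))
      have hnEZY : ¬ S.lt (S.End' Z) Y := by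
        intro h; exact hnZY ((S.lt_iff Z Y).2 (by rwa [hBY]))
      have aBX := (S.begin_end_action X).1
      have aEZ := (S.begin_end_action Z).2
      have h1 : S.lt (S.Begin X) Y ∨ S.Begin X = Y := by
        by_cases h : S.Begin X = Y
        · exact Or.inr h
        · rcases S.act_lin (S.Begin X) Y aBX actY h with h' | h'
          · exact Or.inl h'
          · exact absurd h' hnYBX
      have h2 : S.lt Y (S.End' Z) ∨ Y = S.End' Z := by
        by_cases h : Y = S.End' Z
        · exact Or.inr h
        · rcases S.act_lin Y (S.End' Z) actY aEZ h with h' | h'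
          · exact Or.inl h'
          · exact absurd h' hnEZY
      rcases h1 with h1 | h1 <;> rcases h2 with h2 | h2
      · exact S.lt_trans _ _ _ h1 h2
      · rwa [← h2]
      · rwa [h1]
      · -- degenerate: Begin X = Y = End Z; contradiction via A2
        exfalso
        obtain ⟨R, hRr, hR1, hRγ, hRlt⟩ :=
          S.A2 (S.γ Y) Z hYadd hY0' hZ0 hγYZ (hkY.trans hkYZ)
        obtain ⟨actR, hBR, hER⟩ := S.addRem_action R (by simp [hRr])
        have hγXR : S.lt (S.γ X) R := by
          have := (S.A1 R hR1).2.2.2.1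
          rw [hER, hRγ, hγ] at this; exact this
        have hRX : S.lt R X := by
          apply (S.lt_iff R X).2
          rw [hER, h1]
          rw [h2]; exact hRlt
        exact (S.A1 X hX1).2.2.2.2 ⟨R, hRr, hR1, hRγ.trans hγ, hγXR, hRX⟩
    · rw [hYc] at hYr; cases hYr
  · rw [hX] at hXr; cases hXr
  · -- case 4: X cnt⁰, Y add⁰
    obtain ⟨actY, hBY, hEY⟩ := S.addRem_action Y (by simp [hYa])
    rcases hYZ with ⟨hZc, hZ1, hYγ⟩ | ⟨hYc, _⟩ | ⟨hYr, _⟩ | ⟨hYc, _⟩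
    · have hYEZ : S.lt Y (S.End' Z) := by
        rw [hYγ]; exact (S.A1 Z hZ1).2.2.2.1
      have hnYBX : ¬ S.lt Y (S.Begin X) := by
        intro h; exact hnYX ((S.lt_iff Y X).2 (by rwa [hEY]))
      have aBX := (S.begin_end_action X).1
      by_cases h : S.Begin X = Y
      · rwa [h]
      · rcases S.act_lin (S.Begin X) Y aBX actY h with h' | h'
        · exact S.lt_trans _ _ _ h' hYEZ
        · exact absurd h' hnYBX
    · rw [hYc] at hYa; cases hYa
    · rw [hYr] at hYa; cases hYa
    · rw [hYc] at hYa; cases hYa
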